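/- Let G be a locally compact, second countable, Hausdorff topological group and let Λ ⊆ G be a closed subset with finite local complexity. Then there exists an open neighborhood U of the identity e such that P ∩ U = {e} for every P ∈ Ω₀(Λ). -/

import Mathlib

open Set Filter Topology Pointwise

/-- The space `𝒞(G)` of closed subsets of a topological space `G`. -/
structure CFClosed (G : Type*) [TopologicalSpace G] where
  carrier : Set G
  isClosed' : IsClosed carrier

namespace CFClosed

variable {G : Type*} [TopologicalSpace G]

instance : SetLike (CFClosed G) G where
  coe := CFClosed.carrier
  coe_injective := fun P Q h => by cases P; cases Q; congr

/-- The Chabauty–Fell topology on `𝒞(G)`, generated by the subbasis consisting of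
`O_K = {C | C ∩ K = ∅}` for `K` compact and `O_U = {C | C ∩ U ≠ ∅}` for `U` open. -/
instance chabautyFell : TopologicalSpace (CFClosed G) :=
  TopologicalSpace.generateFrom
    ({s | ∃ K : Set G, IsCompact K ∧ s = {C : CFClosed G | (C : Set G) ∩ K = ∅}} ∪
     {s | ∃ U : Set G, IsOpen U ∧ s = {C : CFClosed G | ((C : Set G) ∩ U).Nonempty}})

end CFClosed
section Hulls

variable {G : Type*} [TopologicalSpace G] [Group G]

/-- The hull `Ω(Λ)` of a closed subset `Λ ⊆ G`: the closure in the Chabauty–Fell topology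
of the set of left translates of `Λ`. -/
def hull (Λ : CFClosed G) : Set (CFClosed G) :=
  closure {P : CFClosed G | ∃ g : G, (P : Set G) = g • (Λ : Set G)}

/-- The discrete hull `Ω₀(Λ)`: elements of the hull containing the identity. -/
def discreteHull (Λ : CFClosed G) : Set (CFClosed G) :=
  {P ∈ hull Λ | (1 : G) ∈ P}

/-- Finite local complexity: for every compact `K ⊆ G` there is a finite collection `𝓕` of
finite subsets of `G` such that every `P ∈ Ω₀(Λ)` satisfies `K ∩ P = h • F` for some
`h ∈ G`, `F ∈ 𝓕`. -/
def FLC (Λ : CFClosed G) : Prop :=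
  ∀ K : Set G, IsCompact K → ∃ 𝓕 : Set (Set G), 𝓕.Finite ∧ (∀ F ∈ 𝓕, F.Finite) ∧
    ∀ P ∈ discreteHull Λ, ∃ h : G, ∃ F ∈ 𝓕, K ∩ (P : Set G) = h • F

end Hulls

/-- FLC implies uniform discreteness near the identity: there is an open neighborhood `U`
of `e` such that `P ∩ U = {e}` for every `P ∈ Ω₀(Λ)`. -/
theorem FLC_implies_uniformly_discrete (G : Type*) [TopologicalSpace G] [Group G]
    [IsTopologicalGroup G] [LocallyCompactSpace G] [SecondCountableTopology G] [T2Space G]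
    (Λ : CFClosed G) (hFLC : FLC Λ) :
    ∃ U : Set G, IsOpen U ∧ (1 : G) ∈ U ∧
      ∀ P ∈ discreteHull Λ, (P : Set G) ∩ U = {1} := by
  obtain ⟨K, hKc, hKmem⟩ := exists_compact_mem_nhds (1 : G)
  obtain ⟨𝓕, h𝓕fin, h𝓕, hcov⟩ := hFLC K hKc
  set S : Set G := ⋃ F ∈ 𝓕, (F⁻¹ * F) \ {1} with hS
  have hSfin : S.Finite :=
    h𝓕fin.biUnion (fun F hF => (((h𝓕 F hF).inv.mul (h𝓕 F hF)).diff))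
  have h1S : (1 : G) ∉ S := by
    simp only [hS, mem_iUnion, mem_diff, mem_singleton_iff]
    rintro ⟨F, hF, -, h⟩; exact h trivial
  refine ⟨interior K ∩ Sᶜ, isOpen_interior.inter hSfin.isClosed.isOpen_compl,
    ⟨mem_interior_iff_mem_nhds.mpr hKmem, h1S⟩, ?_⟩
  intro P hP
  apply Set.eq_singleton_iff_unique_mem.mpr
  refine ⟨⟨hP.2, mem_interior_iff_mem_nhds.mpr hKmem, h1S⟩, ?_⟩
  rintro x ⟨hxP, hxK, hxS⟩
  obtain ⟨h, F, hF, hKP⟩ := hcov P hP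
  have hx : x ∈ h • F := hKP ▸ ⟨interior_subset hxK, hxP⟩
  have h1 : (1 : G) ∈ h • F := hKP ▸ ⟨mem_of_mem_nhds hKmem, hP.2⟩
  obtain ⟨f₁, hf₁, hxf⟩ := hx
  obtain ⟨f₂, hf₂, h1f⟩ := h1
  by_contra hne
  apply hxS
  have hxval : x = f₂⁻¹ * f₁ := by
    have h2 : h * f₂ = 1 := h1f
    have hh : h = f₂⁻¹ := eq_inv_of_mul_eq_one_left h2
    rw [← hxf, hh]; rfl
  refine mem_biUnion hF ⟨?_, hne⟩
  rw [hxval]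
  exact Set.mul_mem_mul (Set.inv_mem_inv.mpr hf₂) hf₁
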